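/- Let r ≥ 1 and work in the field ℚ(q_1,…,q_r) of rational functions in r indeterminates over ℚ. Then the Weyl denominator of Sp(2r) factors as det[ q_i^{r + 1 − j} − q_i^{−(r + 1 − j)} ]_{i,j=1}^{r} = ∏_{i=1}^{r} (q_i − q_i^{−1}) · det[ (q_i + q_i^{−1})^{r − j} ]_{i,j=1}^{r}. -/

import Mathlib

open Finset MvPolynomial

noncomputable def chebS (K : Type*) [CommRing K] : ℕ → Polynomial K
  | 0 => 1
  | 1 => Polynomial.X
  | (n+2) => Polynomial.X * chebS K (n+1) - chebS K n

lemma chebS_monic_deg (K : Type*) [CommRing K] [Nontrivial K] :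
    ∀ n, (chebS K n).Monic ∧ (chebS K n).natDegree = n := by
  intro n
  induction n using Nat.twoStepInduction with
  | zero => refine ⟨?_, ?_⟩ <;> simp [chebS]
  | one => exact ⟨Polynomial.monic_X, Polynomial.natDegree_X⟩
  | more n ih1 ih2 =>
    have hmul : (Polynomial.X * chebS K (n+1)).Monic := Polynomial.monic_X.mul ih2.1
    have hdmul : (Polynomial.X * chebS K (n+1)).natDegree = n + 2 := by
      rw [Polynomial.monic_X.natDegree_mul ih2.1, Polynomial.natDegree_X, ih2.2]
      omega
    have hdeg : (chebS K n).degree < (Polynomial.X * chebS K (n+1)).degree := by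
      rw [Polynomial.degree_eq_natDegree hmul.ne_zero, hdmul]
      refine lt_of_le_of_lt Polynomial.degree_le_natDegree ?_
      rw [ih1.2]
      exact_mod_cast (by omega : n < n + 2)
    constructor
    · exact hmul.sub_of_left hdeg
    · show (Polynomial.X * chebS K (n+1) - chebS K n).natDegree = n + 2
      rw [← hdmul]
      exact Polynomial.natDegree_sub_eq_left_of_natDegree_lt
        (by rw [hdmul, ih1.2]; omega)

lemma chebS_eval {K : Type*} [Field K] {x : K} (hx : x ≠ 0) :
    ∀ n, (x - x⁻¹) * (chebS K n).eval (x + x⁻¹) = x ^ (n+1) - x⁻¹ ^ (n+1) := by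
  intro n
  induction n using Nat.twoStepInduction with
  | zero => simp [chebS]
  | one => simp only [chebS, Polynomial.eval_X, inv_pow]; field_simp; ring
  | more n ih1 ih2 =>
    show (x - x⁻¹) * (Polynomial.X * chebS K (n+1) - chebS K n).eval (x + x⁻¹) = _
    simp only [Polynomial.eval_sub, Polynomial.eval_mul, Polynomial.eval_X]
    have h : (x - x⁻¹) * ((x + x⁻¹) * (chebS K (n+1)).eval (x + x⁻¹) - (chebS K n).eval (x + x⁻¹))
        = (x + x⁻¹) * ((x - x⁻¹) * (chebS K (n+1)).eval (x + x⁻¹))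
          - (x - x⁻¹) * (chebS K n).eval (x + x⁻¹) := by ring
    rw [h, ih2, ih1]
    simp only [inv_pow]
    field_simp
    ring

/-- Factorization of the Weyl denominator of Sp(2r):
det[qᵢ^{r+1−j} − qᵢ^{−(r+1−j)}] = ∏ᵢ (qᵢ − qᵢ⁻¹) · det[(qᵢ + qᵢ⁻¹)^{r−j}]. -/
theorem sp_weyl_denominator_factorization (r : ℕ) (hr : 1 ≤ r) :
    let K := FractionRing (MvPolynomial (Fin r) ℚ)
    let q : Fin r → K := fun i => algebraMap (MvPolynomial (Fin r) ℚ) K (X i)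
    Matrix.det (Matrix.of fun i j : Fin r =>
        q i ^ ((r : ℤ) - (j.val : ℤ)) - q i ^ (-((r : ℤ) - (j.val : ℤ)))) =
    (∏ i : Fin r, (q i - (q i)⁻¹)) *
    Matrix.det (Matrix.of fun i j : Fin r =>
        (q i + (q i)⁻¹) ^ (r - 1 - j.val)) := by
  intro K q
  have hq : ∀ i, q i ≠ 0 := fun i => by
    simpa [q] using
      (map_ne_zero_iff _ (IsFractionRing.injective (MvPolynomial (Fin r) ℚ) K)).mpr
        (MvPolynomial.X_ne_zero i)
  set t : Fin r → K := fun i => q i + (q i)⁻¹ with ht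
  have key : ∀ i j : Fin r,
      q i ^ ((r : ℤ) - (j.val : ℤ)) - q i ^ (-((r : ℤ) - (j.val : ℤ))) =
      (q i - (q i)⁻¹) * (chebS K (r - 1 - j.val)).eval (t i) := by
    intro i j
    have hj : (j : ℕ) < r := j.2
    have h1 : (r : ℤ) - (j.val : ℤ) = ((r - 1 - j.val + 1 : ℕ) : ℤ) := by
      push_cast; omega
    rw [h1, zpow_natCast, zpow_neg, zpow_natCast, ← inv_pow]
    exact (chebS_eval (hq i) _).symm
  have hstep1 : Matrix.det (Matrix.of fun i j : Fin r =>
        q i ^ ((r : ℤ) - (j.val : ℤ)) - q i ^ (-((r : ℤ) - (j.val : ℤ)))) =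
      (∏ i : Fin r, (q i - (q i)⁻¹)) *
      Matrix.det (Matrix.of fun i j : Fin r => (chebS K (r - 1 - j.val)).eval (t i)) := by
    rw [show (Matrix.of fun i j : Fin r =>
        q i ^ ((r : ℤ) - (j.val : ℤ)) - q i ^ (-((r : ℤ) - (j.val : ℤ)))) =
        Matrix.of (fun i j : Fin r =>
          (q i - (q i)⁻¹) * (chebS K (r - 1 - j.val)).eval (t i)) from by
      ext i j; exact key i j]
    exact Matrix.det_mul_column _ _
  rw [hstep1]
  congr 1
  -- column reversal and Vandermonde comparison
  have hB : (Matrix.of fun i j : Fin r =>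
        (chebS K (r - 1 - j.val)).eval (t i)).submatrix id Fin.revPerm =
      Matrix.of (fun i j : Fin r => (chebS K j.val).eval (t i)) := by
    ext i j
    have hj : (j : ℕ) < r := j.2
    have h : r - 1 - (r - (j.val + 1)) = j.val := by omega
    simp only [Matrix.submatrix_apply, id, Matrix.of_apply, Fin.revPerm_apply, Fin.val_rev]
    rw [h]
  have hC : (Matrix.of fun i j : Fin r =>
        (t i) ^ (r - 1 - j.val)).submatrix id Fin.revPerm =
      Matrix.vandermonde t := by
    ext i j
    have hj : (j : ℕ) < r := j.2
    have h : r - 1 - (r - (j.val + 1)) = j.val := by omega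
    simp only [Matrix.submatrix_apply, id, Matrix.of_apply, Fin.revPerm_apply, Fin.val_rev,
      Matrix.vandermonde_apply]
    rw [h]
  have hvan : (Matrix.vandermonde t).det =
      (Matrix.of (fun i j : Fin r => (chebS K j.val).eval (t i))).det :=
    Matrix.det_eval_matrixOfPolynomials_eq_det_vandermonde t (fun j => chebS K j.val)
      (fun j => (chebS_monic_deg K j.val).2) (fun j => (chebS_monic_deg K j.val).1)
  have e1 := Matrix.det_permute' Fin.revPerm
    (Matrix.of fun i j : Fin r => (chebS K (r - 1 - j.val)).eval (t i))
  have e2 := Matrix.det_permute' Fin.revPerm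
    (Matrix.of fun i j : Fin r => (t i) ^ (r - 1 - j.val))
  rw [hB] at e1
  rw [hC] at e2
  have hsign : (Equiv.Perm.sign (Fin.revPerm : Equiv.Perm (Fin r)) : K) ≠ 0 := by
    rcases Int.units_eq_one_or (Equiv.Perm.sign (Fin.revPerm : Equiv.Perm (Fin r))) with h | h <;>
      simp [h]
  have : (Equiv.Perm.sign (Fin.revPerm : Equiv.Perm (Fin r)) : K) *
      (Matrix.of fun i j : Fin r => (chebS K (r - 1 - j.val)).eval (t i)).det =
      (Equiv.Perm.sign (Fin.revPerm : Equiv.Perm (Fin r)) : K) *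
      (Matrix.of fun i j : Fin r => (t i) ^ (r - 1 - j.val)).det := by
    rw [← e1, ← e2, hvan]
  exact mul_left_cancel₀ hsign this
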